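/- Let V be a finite-dimensional real inner product space of dimension d+1 ≥ 2 with a Lorentzian bilinear form g of signature (-,+,...,+). Let n ∈ V be a future-directed unit timelike vector (g(n,n) = -1) and let u ∈ V be future-directed timelike (g(u,u) < 0, g(n,u) < 0). Define the symmetric bilinear form A_n(v,w) := -g(n,u) g(v,w) + g(n,v) g(u,w) + g(u,v) g(n,w). Then A_n is positive definite on V. -/

import Mathlib

set_option maxHeartbeats 1000000 in
theorem stmt2 (d : ℕ) (hd : 1 ≤ d)
    (V : Type*) [AddCommGroup V] [Module ℝ V]
    (g : V →ₗ[ℝ] V →ₗ[ℝ] ℝ) (hg : ∀ v w, g v w = g w v)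
    (b : Module.Basis (Fin (d + 1)) ℝ V)
    (hsig : ∀ i j : Fin (d + 1),
      g (b i) (b j) = if i = j then (if i = 0 then (-1 : ℝ) else 1) else 0)
    (n u : V) (hn : g n n = -1) (hu : g u u < 0) (hfut : g n u < 0) :
    ∀ v : V, v ≠ 0 →
      0 < -(g n u) * g v v + g n v * g u v + g u v * g n v := by
  classical
  -- coordinate representation of g
  have grepr : ∀ x y : V, g x y =
      ∑ i, (if i = 0 then (-1:ℝ) else 1) * (b.repr x i * b.repr y i) := by
    intro x y
    conv_lhs => rw [← b.sum_repr x, ← b.sum_repr y]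
    simp [map_sum, Finset.mul_sum, hsig, mul_ite, ite_mul, Finset.sum_ite_eq, -Module.Basis.sum_repr]
    exact Finset.sum_congr rfl fun i _ => by split <;> ring
  set S : V → V → ℝ := fun x y => ∑ i ∈ Finset.univ.erase 0, b.repr x i * b.repr y i with hS
  have gS : ∀ x y : V, g x y = -(b.repr x 0 * b.repr y 0) + S x y := by
    intro x y
    rw [grepr x y, ← Finset.add_sum_erase Finset.univ _ (Finset.mem_univ 0)]
    simp only [hS]
    congr 1
    · simp
    · exact Finset.sum_congr rfl fun i hi =>
        by rw [if_neg (Finset.mem_erase.mp hi).1, one_mul]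
  have hSnonneg : ∀ x : V, 0 ≤ S x x :=
    fun x => Finset.sum_nonneg fun i _ => mul_self_nonneg _
  have hScs : ∀ x y : V, (S x y) * (S x y) ≤ S x x * S y y := by
    intro x y
    have := Finset.sum_mul_sq_le_sq_mul_sq (Finset.univ.erase 0)
      (fun i => b.repr x i) (fun i => b.repr y i)
    simp only [← sq]
    simpa [hS, sq] using this
  -- p² = 1 + S n n
  have hp : (b.repr n 0) * (b.repr n 0) = 1 + S n n := by
    have := gS n n; rw [hn] at this; linarith
  -- positivity of g on the orthogonal complement of n
  have hperp : ∀ w : V, g n w = 0 → 0 ≤ g w w ∧ (g w w = 0 → w = 0) := by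
    intro w how
    set P := b.repr n 0 with hP
    set W0 := b.repr w 0 with hW0'
    have h1 : P * W0 = S n w := by
      have := gS n w; rw [how] at this; linarith
    have h2 : g w w = -(W0 * W0) + S w w := gS w w
    have hcs : (S n w) * (S n w) ≤ S n n * S w w := hScs n w
    have hkey : S w w ≤ (P * P) * (S w w - W0 * W0) := by
      have e : P * P * (S w w - W0 * W0)
          = (1 + S n n) * S w w - (P * W0) * (P * W0) := by
        rw [← hp]; ring
      rw [h1] at e
      linarith
    constructor
    · nlinarith [hSnonneg w, hSnonneg n]
    · intro hww
      have hX : S w w - W0 * W0 = 0 := by linarith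
      have hSw : S w w = 0 := by nlinarith [hSnonneg w]
      have hW0 : W0 = 0 := by
        have : W0 * W0 = 0 := by linarith
        exact mul_self_eq_zero.mp this
      have hall : ∀ i, b.repr w i = 0 := by
        intro i
        by_cases hi : i = 0
        · rw [hi, ← hW0']; exact hW0
        · have hz : ∀ j ∈ Finset.univ.erase 0, b.repr w j * b.repr w j = 0 := by
            rw [hS] at hSw
            exact (Finset.sum_eq_zero_iff_of_nonneg (fun j _ => mul_self_nonneg _)).mp hSw
          have := hz i (Finset.mem_erase.mpr ⟨hi, Finset.mem_univ i⟩)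
          exact mul_self_eq_zero.mp this
      have : b.repr w = 0 := Finsupp.ext hall
      exact (LinearEquiv.map_eq_zero_iff b.repr).mp this
  -- Cauchy–Schwarz on the orthogonal complement of n
  have hcs_perp : ∀ x y : V, g n x = 0 → g n y = 0 →
      (g x y) * (g x y) ≤ g x x * g y y := by
    intro x y hx hy
    have hq : ∀ t : ℝ, 0 ≤ g y y * (t * t) + (2 * g x y) * t + g x x := by
      intro t
      have ho : g n (x + t • y) = 0 := by
        rw [map_add, map_smul, hx, hy]; simp
      have h0 := (hperp (x + t • y) ho).1
      have hexp : g (x + t • y) (x + t • y)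
          = g y y * (t * t) + (2 * g x y) * t + g x x := by
        simp only [map_add, map_smul, LinearMap.add_apply, LinearMap.smul_apply,
          smul_eq_mul]
        rw [hg y x]; ring
      linarith [hexp ▸ h0]
    have hdis := discrim_le_zero hq
    rw [discrim] at hdis
    nlinarith [hdis]
  -- main argument
  intro v hv
  obtain ⟨α, hgnu⟩ : ∃ a : ℝ, g n u = -a := ⟨-(g n u), by ring⟩
  obtain ⟨β, hgnv⟩ : ∃ a : ℝ, g n v = -a := ⟨-(g n v), by ring⟩
  have hα : 0 < α := by rw [hgnu] at hfut; linarith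
  set u' := u - α • n with hu'
  set v' := v - β • n with hv'
  have hgun : g u n = -α := by rw [hg u n]; exact hgnu
  have hgvn : g v n = -β := by rw [hg v n]; exact hgnv
  have hnu' : g n u' = 0 := by
    rw [hu', map_sub, map_smul, smul_eq_mul, hn, hgnu]; ring
  have hnv' : g n v' = 0 := by
    rw [hv', map_sub, map_smul, smul_eq_mul, hn, hgnv]; ring
  have hUval : g u' u' = g u u + α * α := by
    have e : g u' u' = g u u - α * g u n - α * g n u + α * α * g n n := by
      rw [hu']
      simp only [map_sub, map_smul, LinearMap.sub_apply, LinearMap.smul_apply,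
        smul_eq_mul]
      ring
    rw [hgun, hgnu, hn] at e; linarith [e]
  have hVval : g v' v' = g v v + β * β := by
    have e : g v' v' = g v v - β * g v n - β * g n v + β * β * g n n := by
      rw [hv']
      simp only [map_sub, map_smul, LinearMap.sub_apply, LinearMap.smul_apply,
        smul_eq_mul]
      ring
    rw [hgvn, hgnv, hn] at e; linarith [e]
  have hWval : g u' v' = g u v + α * β := by
    have e : g u' v' = g u v - β * g u n - α * g n v + α * β * g n n := by
      rw [hu', hv']
      simp only [map_sub, map_smul, LinearMap.sub_apply, LinearMap.smul_apply,
        smul_eq_mul]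
      ring
    rw [hgun, hgnv, hn] at e; linarith [e]
  have hU := (hperp u' hnu').1
  have hVpair := hperp v' hnv'
  have hcs := hcs_perp u' v' hnu' hnv'
  have hUlt : g u' u' < α * α := by rw [hUval]; linarith
  rcases eq_or_lt_of_le hVpair.1 with hV0 | hVpos
  · -- g v' v' = 0 : v' = 0, so v = β • n
    have hv'0 : v' = 0 := hVpair.2 hV0.symm
    have hvβ : v = β • n := by
      rw [hv'] at hv'0; exact sub_eq_zero.mp hv'0
    have hβ0 : β ≠ 0 := by
      intro h
      exact hv (by rw [hvβ, h, zero_smul])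
    have h1 : g v v = -(β * β) := by
      have := hVval; rw [← hV0] at this; linarith
    have h2 : g u v = -(α * β) := by
      have hW0 : g u' v' = 0 := by rw [hv'0, map_zero]
      have := hWval; rw [hW0] at this; linarith
    have heq : -(g n u) * g v v + g n v * g u v + g u v * g n v = α * (β * β) := by
      rw [hgnu, hgnv, h1, h2]; ring
    rw [heq]
    exact mul_pos hα (mul_self_pos.mpr hβ0)
  · -- g v' v' > 0
    have h1 : g v v = g v' v' - β * β := by linarith [hVval]
    have h2 : g u v = g u' v' - α * β := by linarith [hWval]
    rw [hgnu, hgnv, h1, h2]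
    have hprod : 0 < (α * α - g u' u') * g v' v' :=
      mul_pos (by linarith) hVpos
    nlinarith [sq_nonneg (α * β - g u' v'), hcs, hprod, hα]
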